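/- For the unit ball B_n in ℝⁿ and any θ ∈ ℝⁿ, the quantity ⟨θ, Σ(θ)θ⟩ (where Σ(θ) is the covariance of the Boltzmann distribution with parameter θ on B_n) equals ‖θ‖² E[Y₁²] − (‖θ‖ E[Y₁])², where Y₁ has density on [−1,1] proportional to t ↦ (1−t²)^{(n−1)/2} e^{‖θ‖ t}; i.e., the problem reduces by rotational symmetry to a one-dimensional integral. -/

import Mathlib

open MeasureTheory
open scoped RealInnerProductSpace

/-- For the Boltzmann distribution on the unit ball `B_n`, the quantity `⟨θ, Σ(θ)θ⟩` reduces by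
rotational symmetry to one-dimensional integrals: it equals `‖θ‖² E[Y₁²] - (‖θ‖ E[Y₁])²` where
`Y₁` has density proportional to `(1 - t²)^{(n-1)/2} e^{‖θ‖ t}` on `[-1, 1]`. -/
lemma slice_aux (m : ℕ) (f : ℝ → ℝ) (hf : Continuous f) :
    ∫ x in Metric.closedBall (0 : EuclideanSpace ℝ (Fin (m+1))) 1, f (x 0)
      = ((volume (Metric.closedBall (0 : EuclideanSpace ℝ (Fin m)) 1)).toReal) *
        ∫ t in Set.Icc (-1 : ℝ) 1, (1 - t ^ 2) ^ ((m : ℝ) / 2) * f t := by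
  classical
  set C : ℝ := (volume (Metric.closedBall (0 : EuclideanSpace ℝ (Fin m)) 1)).toReal with hC
  let e₁ : (ℝ × EuclideanSpace ℝ (Fin m)) ≃ᵐ (ℝ × (Fin m → ℝ)) :=
    (MeasurableEquiv.refl ℝ).prodCongr ((MeasurableEquiv.toLp 2 (Fin m → ℝ)).symm)
  let e₂ : (ℝ × (Fin m → ℝ)) ≃ᵐ (Fin (m+1) → ℝ) :=
    (MeasurableEquiv.piFinSuccAbove (fun _ => ℝ) 0).symm
  let e₃ : (Fin (m+1) → ℝ) ≃ᵐ EuclideanSpace ℝ (Fin (m+1)) :=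
    ((MeasurableEquiv.toLp 2 (Fin (m+1) → ℝ)).symm).symm
  let T : (ℝ × EuclideanSpace ℝ (Fin m)) ≃ᵐ EuclideanSpace ℝ (Fin (m+1)) :=
    e₁.trans (e₂.trans e₃)
  have hT : MeasurePreserving T volume volume := by
    have h₁ : MeasurePreserving e₁ volume volume :=
      (MeasurePreserving.id volume).prod
        (EuclideanSpace.volume_preserving_symm_measurableEquiv_toLp (Fin m))
    have h₂ : MeasurePreserving e₂ volume volume :=
      (volume_preserving_piFinSuccAbove (fun _ : Fin (m+1) => ℝ) 0).symm
    have h₃ : MeasurePreserving e₃ volume volume :=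
      (EuclideanSpace.volume_preserving_symm_measurableEquiv_toLp (Fin (m+1))).symm
    exact h₃.comp (h₂.comp h₁)
  have hTapp : ∀ (p : ℝ × EuclideanSpace ℝ (Fin m)) (i : Fin (m+1)),
      T p i = Fin.insertNth (α := fun _ => ℝ) 0 p.1 (fun j => p.2 j) i := fun p i => rfl
  have hT0 : ∀ p : ℝ × EuclideanSpace ℝ (Fin m), T p 0 = p.1 := by
    intro p; rw [hTapp]; simp
  have hTnorm : ∀ p : ℝ × EuclideanSpace ℝ (Fin m),
      ‖T p‖ ^ 2 = p.1 ^ 2 + ‖p.2‖ ^ 2 := by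
    intro p
    have h1 : ∀ i : Fin m, T p i.succ = p.2 i := by
      intro i
      rw [hTapp]
      have h : i.succ = Fin.succAbove 0 i := by simp [Fin.succAbove_zero]
      rw [h, Fin.insertNth_apply_succAbove]
    have h2 := EuclideanSpace.norm_eq (T p)
    have h3 := EuclideanSpace.norm_eq p.2
    rw [h2, h3, Real.sq_sqrt (by positivity), Real.sq_sqrt (by positivity),
      Fin.sum_univ_succ, hT0]
    simp [h1, sq_abs]
  have hpre : T ⁻¹' (Metric.closedBall 0 1)
      = {p : ℝ × EuclideanSpace ℝ (Fin m) | p.1 ^ 2 + ‖p.2‖ ^ 2 ≤ 1} := by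
    ext p
    simp only [Set.mem_preimage, Metric.mem_closedBall, dist_zero_right, Set.mem_setOf_eq]
    rw [← hTnorm p]
    constructor
    · intro h; nlinarith [norm_nonneg (T p)]
    · intro h; nlinarith [norm_nonneg (T p)]
  set S : Set (ℝ × EuclideanSpace ℝ (Fin m)) :=
    {p | p.1 ^ 2 + ‖p.2‖ ^ 2 ≤ 1} with hS
  have hS_closed : IsClosed S :=
    isClosed_le (by fun_prop) continuous_const
  have hSmeas : MeasurableSet S := hS_closed.measurableSet
  have hS_sub : S ⊆ Metric.closedBall 0 1 := by
    intro p hp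
    have hp' : p.1 ^ 2 + ‖p.2‖ ^ 2 ≤ 1 := hp
    rw [Metric.mem_closedBall, dist_zero_right, Prod.norm_def]
    apply max_le
    · rw [Real.norm_eq_abs]
      nlinarith [sq_nonneg ‖p.2‖, abs_nonneg p.1, sq_abs p.1]
    · nlinarith [sq_nonneg p.1, norm_nonneg p.2]
  have hScompact : IsCompact S :=
    Metric.isCompact_of_isClosed_isBounded hS_closed
      (Metric.isBounded_closedBall.subset hS_sub)
  have hIntOn : IntegrableOn (fun p : ℝ × EuclideanSpace ℝ (Fin m) => f p.1) S volume :=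
    (hf.comp continuous_fst).continuousOn.integrableOn_compact hScompact
  have hint : Integrable (S.indicator fun p : ℝ × EuclideanSpace ℝ (Fin m) => f p.1) volume :=
    (integrable_indicator_iff hSmeas).2 hIntOn
  have step1 : (∫ x in Metric.closedBall (0 : EuclideanSpace ℝ (Fin (m+1))) 1, f (x 0))
      = ∫ p in S, f p.1 := by
    rw [← hT.setIntegral_preimage_emb T.measurableEmbedding (fun x => f (x 0))
      (Metric.closedBall 0 1), hpre]
    exact setIntegral_congr_fun hSmeas (fun p _ => by rw [hT0])
  rw [step1, ← integral_indicator hSmeas]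
  rw [Measure.volume_eq_prod] at hint ⊢
  rw [integral_prod _ hint]
  have inner_eq : ∀ t : ℝ,
      (∫ z : EuclideanSpace ℝ (Fin m), S.indicator (fun p => f p.1) (t, z))
      = Set.indicator (Set.Icc (-1 : ℝ) 1)
          (fun t => ((1 - t ^ 2) ^ ((m : ℝ) / 2) * C) * f t) t := by
    intro t
    by_cases ht : t ∈ Set.Icc (-1 : ℝ) 1
    · have h1 : (0 : ℝ) ≤ 1 - t ^ 2 := by
        obtain ⟨h1, h2⟩ := ht; nlinarith
      have hfun : (fun z : EuclideanSpace ℝ (Fin m) => S.indicator (fun p => f p.1) (t, z))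
          = (Metric.closedBall (0 : EuclideanSpace ℝ (Fin m))
              (Real.sqrt (1 - t ^ 2))).indicator (fun _ => f t) := by
        funext z
        have hiff : (t, z) ∈ S ↔ z ∈ Metric.closedBall (0 : EuclideanSpace ℝ (Fin m))
            (Real.sqrt (1 - t ^ 2)) := by
          simp only [hS, Set.mem_setOf_eq, Metric.mem_closedBall, dist_zero_right]
          rw [show (‖z‖ ≤ Real.sqrt (1 - t ^ 2)) ↔ ‖z‖ ^ 2 ≤ 1 - t ^ 2 from
            Real.le_sqrt (norm_nonneg z) h1]
          constructor <;> intro <;> linarith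
        simp only [Set.indicator_apply, hiff]
      rw [hfun, integral_indicator measurableSet_closedBall, setIntegral_const, measureReal_def,
        Measure.addHaar_closedBall' _ _ (Real.sqrt_nonneg _), Set.indicator_of_mem ht]
      rw [ENNReal.toReal_mul, ENNReal.toReal_ofReal (by positivity)]
      have hpow : (Real.sqrt (1 - t ^ 2)) ^ Module.finrank ℝ (EuclideanSpace ℝ (Fin m))
          = (1 - t ^ 2) ^ ((m : ℝ) / 2) := by
        rw [finrank_euclideanSpace_fin, ← Real.rpow_natCast (Real.sqrt (1 - t ^ 2)) m,
          Real.sqrt_eq_rpow, ← Real.rpow_mul h1]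
        congr 1
        ring
      rw [hpow, smul_eq_mul]
    · have h2 : 1 < t ^ 2 := by
        simp only [Set.mem_Icc, not_and_or, not_le] at ht
        rcases ht with h | h <;> nlinarith
      have hfun : (fun z : EuclideanSpace ℝ (Fin m) => S.indicator (fun p => f p.1) (t, z))
          = fun _ => 0 := by
        funext z
        apply Set.indicator_of_notMem
        simp only [hS, Set.mem_setOf_eq, not_le]
        nlinarith [sq_nonneg ‖z‖]
      rw [hfun, integral_zero, Set.indicator_of_notMem ht]
  calc (∫ t : ℝ, ∫ z : EuclideanSpace ℝ (Fin m), S.indicator (fun p => f p.1) (t, z))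
      = ∫ t : ℝ, Set.indicator (Set.Icc (-1 : ℝ) 1)
          (fun t => ((1 - t ^ 2) ^ ((m : ℝ) / 2) * C) * f t) t := by
        exact integral_congr_ae (Filter.Eventually.of_forall inner_eq)
    _ = ∫ t in Set.Icc (-1 : ℝ) 1, ((1 - t ^ 2) ^ ((m : ℝ) / 2) * C) * f t :=
        integral_indicator measurableSet_Icc
    _ = ∫ t in Set.Icc (-1 : ℝ) 1, C * ((1 - t ^ 2) ^ ((m : ℝ) / 2) * f t) := by
        apply setIntegral_congr_fun measurableSet_Icc
        intro t _
        ring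
    _ = C * ∫ t in Set.Icc (-1 : ℝ) 1, (1 - t ^ 2) ^ ((m : ℝ) / 2) * f t :=
        integral_const_mul _ _

open scoped RealInnerProductSpace

lemma rot_aux (m : ℕ) (θ : EuclideanSpace ℝ (Fin (m+1))) (hθ : θ ≠ 0) (f : ℝ → ℝ) :
    ∫ x in Metric.closedBall (0 : EuclideanSpace ℝ (Fin (m+1))) 1, f ⟪θ, x⟫
      = ∫ x in Metric.closedBall (0 : EuclideanSpace ℝ (Fin (m+1))) 1, f (‖θ‖ * x 0) := by
  set u : EuclideanSpace ℝ (Fin (m+1)) := ‖θ‖⁻¹ • θ with hu_def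
  have hθn : ‖θ‖ ≠ 0 := norm_ne_zero_iff.2 hθ
  have hu : ‖u‖ = 1 := by
    rw [hu_def, norm_smul, norm_inv, norm_norm, inv_mul_cancel₀ hθn]
  set v : EuclideanSpace ℝ (Fin (m+1)) := EuclideanSpace.single (0 : Fin (m+1)) (1 : ℝ) with hv_def
  have hv : ‖v‖ = 1 := by rw [hv_def, EuclideanSpace.norm_single, norm_one]
  set Q : EuclideanSpace ℝ (Fin (m+1)) ≃ₗᵢ[ℝ] EuclideanSpace ℝ (Fin (m+1)) := Submodule.reflection (ℝ ∙ (v - u))ᗮ with hQ_def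
  have hQv : Q v = u := Submodule.reflection_sub (by rw [hv, hu])
  have hQθ : Q (‖θ‖ • v) = θ := by
    rw [Q.map_smul, hQv, hu_def, smul_smul, mul_inv_cancel₀ hθn, one_smul]
  have key : ∀ y : EuclideanSpace ℝ (Fin (m+1)), ⟪θ, Q y⟫ = ‖θ‖ * y 0 := by
    intro y
    calc ⟪θ, Q y⟫ = ⟪Q (‖θ‖ • v), Q y⟫ := by rw [hQθ]
      _ = ⟪‖θ‖ • v, y⟫ := Q.inner_map_map _ _
      _ = ‖θ‖ * ⟪v, y⟫ := real_inner_smul_left _ _ _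
      _ = ‖θ‖ * y 0 := by
          rw [hv_def]
          congr 1
          simp [EuclideanSpace.inner_single_left]
  have hQpre : ⇑Q ⁻¹' Metric.closedBall (0 : EuclideanSpace ℝ (Fin (m+1))) 1 = Metric.closedBall 0 1 := by
    ext y
    simp [Metric.mem_closedBall, dist_zero_right, Q.norm_map]
  have hemb : MeasurableEmbedding ⇑Q := Q.toHomeomorph.measurableEmbedding
  rw [← Q.measurePreserving.setIntegral_preimage_emb hemb (fun x => f ⟪θ, x⟫)
    (Metric.closedBall 0 1), hQpre]
  exact setIntegral_congr_fun measurableSet_closedBall fun y _ => by rw [key]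

lemma ball_inner_integral (m : ℕ) (θ : EuclideanSpace ℝ (Fin (m+1))) (hθ : θ ≠ 0)
    (f : ℝ → ℝ) (hf : Continuous f) :
    ∫ x in Metric.closedBall (0 : EuclideanSpace ℝ (Fin (m+1))) 1, f ⟪θ, x⟫
      = ((volume (Metric.closedBall (0 : EuclideanSpace ℝ (Fin m)) 1)).toReal) *
        ∫ t in Set.Icc (-1 : ℝ) 1, (1 - t ^ 2) ^ ((m : ℝ) / 2) * f (‖θ‖ * t) :=
  (rot_aux m θ hθ f).trans (slice_aux m (fun t => f (‖θ‖ * t))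
    (hf.comp (continuous_const.mul continuous_id)))

theorem unit_ball_boltzmann_variance_reduction {n : ℕ} (hn : 1 ≤ n)
    (θ : EuclideanSpace ℝ (Fin n)) :
    (∫ x in Metric.closedBall (0 : EuclideanSpace ℝ (Fin n)) 1,
          ⟪θ, x⟫ ^ 2 * Real.exp ⟪θ, x⟫) /
        (∫ x in Metric.closedBall (0 : EuclideanSpace ℝ (Fin n)) 1, Real.exp ⟪θ, x⟫)
      - ((∫ x in Metric.closedBall (0 : EuclideanSpace ℝ (Fin n)) 1,
            ⟪θ, x⟫ * Real.exp ⟪θ, x⟫) /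
          (∫ x in Metric.closedBall (0 : EuclideanSpace ℝ (Fin n)) 1, Real.exp ⟪θ, x⟫)) ^ 2
    = ‖θ‖ ^ 2 *
        ((∫ t in Set.Icc (-1 : ℝ) 1,
            t ^ 2 * (1 - t ^ 2) ^ (((n : ℝ) - 1) / 2) * Real.exp (‖θ‖ * t)) /
          (∫ t in Set.Icc (-1 : ℝ) 1,
            (1 - t ^ 2) ^ (((n : ℝ) - 1) / 2) * Real.exp (‖θ‖ * t)))
      - (‖θ‖ *
          ((∫ t in Set.Icc (-1 : ℝ) 1,
              t * (1 - t ^ 2) ^ (((n : ℝ) - 1) / 2) * Real.exp (‖θ‖ * t)) /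
            (∫ t in Set.Icc (-1 : ℝ) 1,
              (1 - t ^ 2) ^ (((n : ℝ) - 1) / 2) * Real.exp (‖θ‖ * t)))) ^ 2 := by
  rcases eq_or_ne θ 0 with rfl | hθ
  · simp
  · obtain ⟨m, rfl⟩ : ∃ m, n = m + 1 := ⟨n - 1, (Nat.succ_pred_eq_of_pos hn).symm⟩
    have hexp : (((m + 1 : ℕ) : ℝ) - 1) / 2 = (m : ℝ) / 2 := by push_cast; ring
    rw [hexp]
    set C : ℝ := (volume (Metric.closedBall (0 : EuclideanSpace ℝ (Fin m)) 1)).toReal with hCdef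
    have hC0 : C ≠ 0 := by
      refine ne_of_gt (ENNReal.toReal_pos ?_ ?_)
      · exact (Metric.measure_closedBall_pos volume (0 : EuclideanSpace ℝ (Fin m))
          one_pos).ne'
      · exact (measure_closedBall_lt_top).ne
    set r : ℝ := ‖θ‖ with hrdef
    set A : ℝ := ∫ t in Set.Icc (-1 : ℝ) 1,
        t ^ 2 * (1 - t ^ 2) ^ ((m : ℝ) / 2) * Real.exp (r * t) with hA
    set M : ℝ := ∫ t in Set.Icc (-1 : ℝ) 1,
        t * (1 - t ^ 2) ^ ((m : ℝ) / 2) * Real.exp (r * t) with hM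
    set B : ℝ := ∫ t in Set.Icc (-1 : ℝ) 1,
        (1 - t ^ 2) ^ ((m : ℝ) / 2) * Real.exp (r * t) with hB
    have h2 : (∫ x in Metric.closedBall (0 : EuclideanSpace ℝ (Fin (m+1))) 1,
        ⟪θ, x⟫ ^ 2 * Real.exp ⟪θ, x⟫) = C * (r ^ 2 * A) := by
      rw [ball_inner_integral m θ hθ (fun s => s ^ 2 * Real.exp s)
        (by fun_prop)]
      congr 1
      rw [hA, ← MeasureTheory.integral_const_mul]
      exact setIntegral_congr_fun measurableSet_Icc fun t _ => by ring
    have h1 : (∫ x in Metric.closedBall (0 : EuclideanSpace ℝ (Fin (m+1))) 1,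
        ⟪θ, x⟫ * Real.exp ⟪θ, x⟫) = C * (r * M) := by
      rw [ball_inner_integral m θ hθ (fun s => s * Real.exp s) (by fun_prop)]
      congr 1
      rw [hM, ← MeasureTheory.integral_const_mul]
      exact setIntegral_congr_fun measurableSet_Icc fun t _ => by ring
    have h0 : (∫ x in Metric.closedBall (0 : EuclideanSpace ℝ (Fin (m+1))) 1,
        Real.exp ⟪θ, x⟫) = C * B := by
      rw [ball_inner_integral m θ hθ (fun s => Real.exp s) (by fun_prop)]
    rw [h2, h1, h0, mul_div_mul_left _ _ hC0, mul_div_mul_left _ _ hC0,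
      mul_div_assoc, mul_div_assoc]
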